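/- Let Δ ∈ ℝ with exp(iΔ) ≠ 1. Then for every α ∈ ℂ, |⟪c(α), c(exp(iΔ) · α)⟫|² = exp(−|α|² · |1 − exp(iΔ)|²), and this quantity tends to 0 as |α| → ∞. -/

import Mathlib

/-- The coherent state vector `c(α) ∈ ℓ²(ℕ, ℂ)`, whose `n`-th Fock-basis
coefficient is `exp(−|α|²/2) · αⁿ / √(n!)`. -/
noncomputable def coherent (α : ℂ) : lp (fun _ : ℕ => ℂ) 2 :=
  ⟨fun n => Complex.exp (-(((‖α‖) ^ 2 : ℝ) : ℂ) / 2) * α ^ n /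
      (Real.sqrt (Nat.factorial n) : ℂ), by
    apply memℓp_gen
    have hs : Summable (fun n : ℕ =>
        (Real.exp (-(‖α‖) ^ 2 / 2)) ^ 2 * ((‖α‖ ^ 2) ^ n / (Nat.factorial n))) := by
      exact (Real.summable_pow_div_factorial _).mul_left _
    apply hs.congr
    intro n
    have hfac : (0 : ℝ) < Real.sqrt (Nat.factorial n) := by positivity
    have h2 : (2 : ENNReal).toReal = ((2 : ℕ) : ℝ) := by norm_num
    rw [h2, Real.rpow_natCast]
    simp only [norm_div, norm_mul]
    rw [Complex.norm_exp]
    have hre : (-(((‖α‖) ^ 2 : ℝ) : ℂ) / 2).re = -(‖α‖) ^ 2 / 2 := by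
      simp [sq]
    rw [hre, norm_pow, Complex.norm_real, Real.norm_eq_abs, abs_of_pos hfac, eq_comm, div_pow, mul_pow,
      Real.sq_sqrt (Nat.cast_nonneg _)]
    ring⟩

open Complex in
lemma tsum_exp_div (x : ℂ) : ∑' n : ℕ, x ^ n / (Nat.factorial n : ℂ) = Complex.exp x := by
  rw [Complex.exp_eq_exp_ℂ, NormedSpace.exp_eq_tsum_div]

lemma coherent_tsum (α β : ℂ) :
    (∑' n : ℕ, (starRingEnd ℂ) (Complex.exp (-(((‖α‖) ^ 2 : ℝ) : ℂ) / 2) * α ^ n /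
      (Real.sqrt (Nat.factorial n) : ℂ)) * (Complex.exp (-(((‖β‖) ^ 2 : ℝ) : ℂ) / 2) * β ^ n /
      (Real.sqrt (Nat.factorial n) : ℂ)))
    = Complex.exp (-(((‖α‖) ^ 2 : ℝ) : ℂ) / 2 - ((‖β‖) ^ 2 : ℝ) / 2 + (starRingEnd ℂ) α * β) := by
  have h1 : ∀ n : ℕ, (starRingEnd ℂ) (Complex.exp (-(((‖α‖) ^ 2 : ℝ) : ℂ) / 2) * α ^ n /
      (Real.sqrt (Nat.factorial n) : ℂ)) * (Complex.exp (-(((‖β‖) ^ 2 : ℝ) : ℂ) / 2) * β ^ n /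
      (Real.sqrt (Nat.factorial n) : ℂ))
      = (Complex.exp (-(((‖α‖) ^ 2 : ℝ) : ℂ) / 2) * Complex.exp (-(((‖β‖) ^ 2 : ℝ) : ℂ) / 2)) *
        (((starRingEnd ℂ) α * β) ^ n / (Nat.factorial n : ℂ)) := by
    intro n
    have hc : (starRingEnd ℂ) (Complex.exp (-(((‖α‖) ^ 2 : ℝ) : ℂ) / 2))
        = Complex.exp (-(((‖α‖) ^ 2 : ℝ) : ℂ) / 2) := by
      rw [← Complex.exp_conj]; congr 1
      simp [map_div₀, map_ofNat]
    have hsq : ((Real.sqrt (Nat.factorial n) : ℝ) : ℂ) * ((Real.sqrt (Nat.factorial n) : ℝ) : ℂ) = (Nat.factorial n : ℂ) := by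
      rw [← Complex.ofReal_mul, ← Real.sqrt_mul_self (Nat.cast_nonneg _)]
      norm_num
    have hconj : (starRingEnd ℂ) ((Real.sqrt (Nat.factorial n) : ℝ) : ℂ) = ((Real.sqrt (Nat.factorial n) : ℝ) : ℂ) :=
      Complex.conj_ofReal _
    rw [map_div₀, map_mul, map_pow, hc, hconj, div_mul_div_comm, hsq, mul_pow]
    ring
  rw [tsum_congr h1, tsum_mul_left, tsum_exp_div, ← Complex.exp_add, ← Complex.exp_add]
  ring_nf

lemma coherent_inner (α β : ℂ) :
    (inner ℂ (coherent α) (coherent β) : ℂ)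
    = Complex.exp (-(((‖α‖) ^ 2 : ℝ) : ℂ) / 2 - ((‖β‖) ^ 2 : ℝ) / 2 + (starRingEnd ℂ) α * β) := by
  rw [lp.inner_eq_tsum]
  have hco : ∀ (γ : ℂ) (n : ℕ), (coherent γ : ∀ _ : ℕ, ℂ) n
      = Complex.exp (-(((‖γ‖) ^ 2 : ℝ) : ℂ) / 2) * γ ^ n / (Real.sqrt (Nat.factorial n) : ℂ) :=
    fun γ n => rfl
  simp only [hco, RCLike.inner_apply]
  simp only [mul_comm _ ((starRingEnd ℂ) _)]
  exact coherent_tsum α β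

lemma fid_eq (Δ : ℝ) (α : ℂ) :
    (‖(inner ℂ (coherent α) (coherent (Complex.exp (Complex.I * (Δ : ℂ)) * α)) : ℂ)‖) ^ 2 =
      Real.exp (-(‖α‖) ^ 2 * (‖1 - Complex.exp (Complex.I * (Δ : ℂ))‖) ^ 2) := by
  set u := Complex.exp (Complex.I * (Δ : ℂ)) with hu
  have habsu : ‖u‖ = 1 := by
    rw [hu, Complex.norm_exp]; simp
  rw [coherent_inner, Complex.norm_exp, ← Real.exp_nat_mul]
  congr 1
  have h1 : ‖u * α‖ = ‖α‖ := by rw [norm_mul, habsu, one_mul]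
  have h2 : ((starRingEnd ℂ) α * (u * α)).re = (‖α‖) ^ 2 * u.re := by
    have : (starRingEnd ℂ) α * (u * α) = (((‖α‖) ^ 2 : ℝ) : ℂ) * u := by
      rw [← Complex.normSq_eq_norm_sq, ← Complex.mul_conj]
      ring
    rw [this, Complex.re_ofReal_mul]
  have h3 : (‖1 - u‖) ^ 2 = 2 - 2 * u.re := by
    rw [Complex.sq_norm, Complex.normSq_sub, Complex.normSq_one, Complex.normSq_eq_norm_sq, habsu]
    have : (1 * (starRingEnd ℂ) u).re = u.re := by simp [Complex.conj_re]
    rw [this]; ring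
  simp only [Complex.add_re, Complex.sub_re, Complex.div_ofNat_re, Complex.neg_re,
    Complex.ofReal_re, h1, h2, h3]
  push_cast
  ring

/-- The fidelity between a coherent state and its mis-rotated version equals
`exp(−|α|²|1 − e^{iΔ}|²)` and tends to `0` as `|α| → ∞` when `e^{iΔ} ≠ 1`. -/
theorem miscalibrated_phase_rotation_fidelity (Δ : ℝ)
    (hΔ : Complex.exp (Complex.I * (Δ : ℂ)) ≠ 1) :
    (∀ α : ℂ,
      (‖(inner ℂ (coherent α) (coherent (Complex.exp (Complex.I * (Δ : ℂ)) * α)) : ℂ)‖) ^ 2 =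
        Real.exp (-(‖α‖) ^ 2 * (‖1 - Complex.exp (Complex.I * (Δ : ℂ))‖) ^ 2)) ∧
    Filter.Tendsto
      (fun α : ℂ =>
        (‖(inner ℂ (coherent α) (coherent (Complex.exp (Complex.I * (Δ : ℂ)) * α)) : ℂ)‖) ^ 2)
      (Filter.comap (fun z : ℂ => ‖z‖) Filter.atTop) (nhds 0) := by
  refine ⟨fid_eq Δ, ?_⟩
  have heq : (fun α : ℂ =>
        (‖(inner ℂ (coherent α) (coherent (Complex.exp (Complex.I * (Δ : ℂ)) * α)) : ℂ)‖) ^ 2)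
      = fun α : ℂ => Real.exp (-(‖α‖) ^ 2 *
          (‖1 - Complex.exp (Complex.I * (Δ : ℂ))‖) ^ 2) := funext (fid_eq Δ)
  rw [heq]
  set c := (‖1 - Complex.exp (Complex.I * (Δ : ℂ))‖) ^ 2 with hc
  have hcpos : 0 < c := by
    have h : 1 - Complex.exp (Complex.I * (Δ : ℂ)) ≠ 0 := sub_ne_zero.mpr (Ne.symm hΔ)
    have := norm_pos_iff.mpr h
    positivity
  have h1 : Filter.Tendsto (fun r : ℝ => Real.exp (-r ^ 2 * c)) Filter.atTop (nhds 0) := by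
    apply Real.tendsto_exp_atBot.comp
    have h2 : Filter.Tendsto (fun r : ℝ => r ^ 2 * c) Filter.atTop Filter.atTop :=
      (Filter.tendsto_pow_atTop (by norm_num)).atTop_mul_const hcpos
    simpa using Filter.tendsto_neg_atBot_iff.mpr h2
  exact h1.comp Filter.tendsto_comap
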